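/- arXiv:1904.11682 — 2 statements merged into one kernel-verified Lean document; each statement's English description precedes it below -/
import Mathlib

section
/- Let d be a natural number and let g : ℝ^d → ℝ^{d×d} be an ℝ-linear map. Suppose r, r' ∈ ℝ^d satisfy g(r)ᵀ = g(r) and g(r')ᵀ = -g(r'). Fix h, t ∈ ℝ^d with hᵀ g(r) t ≠ 0 and hᵀ g(r') t ≠ 0. Then for every pair of real numbers a, b there exist scalars w₁, w₂ ∈ ℝ such that, setting r'' = w₁ • r + w₂ • r', one has hᵀ g(r'') t = a and tᵀ g(r'') h = b. (This is the 'general asymmetric relations' case of Proposition 1: the scoring function can realize any prescribed pair of forward and backward scores.) -/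
open Matrix

theorem bilinear_general_asymmetric_relation (d : ℕ)
    (g : (Fin d → ℝ) →ₗ[ℝ] Matrix (Fin d) (Fin d) ℝ)
    (r r' : Fin d → ℝ)
    (hsym : (g r).transpose = g r)
    (hskew : (g r').transpose = -(g r'))
    (h t : Fin d → ℝ)
    (hr : h ⬝ᵥ (g r).mulVec t ≠ 0)
    (hr' : h ⬝ᵥ (g r').mulVec t ≠ 0)
    (a b : ℝ) :
    ∃ w₁ w₂ : ℝ,
      h ⬝ᵥ (g (w₁ • r + w₂ • r')).mulVec t = a ∧
      t ⬝ᵥ (g (w₁ • r + w₂ • r')).mulVec h = b := by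
  set s := h ⬝ᵥ (g r).mulVec t with hs
  set k := h ⬝ᵥ (g r').mulVec t with hk
  have key : ∀ M : Matrix (Fin d) (Fin d) ℝ,
      t ⬝ᵥ M.mulVec h = h ⬝ᵥ M.transpose.mulVec t := by
    intro M
    rw [dotProduct_mulVec, ← mulVec_transpose, dotProduct_comm]
  have h1 : t ⬝ᵥ (g r).mulVec h = s := by rw [key, hsym]
  have h2 : t ⬝ᵥ (g r').mulVec h = -k := by
    rw [key, hskew, neg_mulVec, dotProduct_neg, hk]
  refine ⟨(a + b) / (2 * s), (a - b) / (2 * k), ?_, ?_⟩ <;>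
  · simp only [map_add, LinearMap.map_smul, Matrix.add_mulVec,
      Matrix.smul_mulVec, dotProduct_add, dotProduct_smul, smul_eq_mul,
      ← hs, ← hk, h1, h2]
    field_simp
    ring
end

section
/- Let d be a natural number and h, t ∈ ℂ^d, and let r ∈ ℂ^d have all components real (i.e. the imaginary part of every r_k is 0). Then Re(∑_k t_k · r_k · conj(h_k)) = Re(∑_k h_k · r_k · conj(t_k)). (This shows the ComplEx scoring function models symmetric relations when the relation embedding is real.) -/
theorem complEx_real_relation_symmetric (d : ℕ) (h t : Fin d → ℂ) (r : Fin d → ℂ)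
    (hr : ∀ k, (r k).im = 0) :
    (∑ k : Fin d, t k * r k * (starRingEnd ℂ) (h k)).re =
      (∑ k : Fin d, h k * r k * (starRingEnd ℂ) (t k)).re := by
  simp only [Complex.re_sum]
  refine Finset.sum_congr rfl fun k _ => ?_
  simp [Complex.mul_re, Complex.mul_im, hr k]
  ring
end
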